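/- For d ≥ 7, the set N^{(3)}_{d,3} = N_d ∪ {(d-3)d+1, (d-4)d+1, (d-5)d+1} is a numerical semigroup with exactly (d-1)(d-2)/2 - 3 gaps. -/

import Mathlib

def Nd (d : ℕ) : Set ℕ := {n | ∃ a b : ℕ, n = a * (d - 1) + b * d}

namespace Stmt16Aux

lemma sub_one (m : ℕ) : m + 7 - 1 = m + 6 := by omega

lemma mem_Nd (m a b : ℕ) : a * (m + 6) + b * (m + 7) ∈ Nd (m + 7) :=
  ⟨a, b, by rw [sub_one]⟩

lemma mem_Nd_iff (m n : ℕ) : n ∈ Nd (m + 7) ↔ n % (m + 6) ≤ n / (m + 6) := by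
  constructor
  · rintro ⟨a, b, rfl⟩
    rw [sub_one]
    have h1 : (a * (m + 6) + b * (m + 7)) = (m + 6) * (a + b) + b := by ring
    rw [h1, Nat.mul_add_mod, Nat.mul_add_div (by omega)]
    exact le_trans (Nat.mod_le _ _) (le_trans (Nat.le_add_left b a) (Nat.le_add_right _ _))
  · intro h
    obtain ⟨s, hs⟩ : ∃ s, n / (m + 6) = n % (m + 6) + s := ⟨_, (Nat.add_sub_cancel' h).symm⟩
    refine ⟨s, n % (m + 6), ?_⟩
    rw [sub_one]
    have key := Nat.div_add_mod n (m + 6)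
    rw [hs] at key
    nlinarith [key]

def Gf (m : ℕ) : Finset ℕ :=
  (Finset.range (m + 6)).biUnion (fun r => (Finset.range r).image (fun q => q * (m + 6) + r))

lemma modval (m q r : ℕ) (h : r < m + 6) : (q * (m + 6) + r) % (m + 6) = r := by
  rw [show q * (m + 6) + r = (m + 6) * q + r from by ring, Nat.mul_add_mod,
    Nat.mod_eq_of_lt h]

lemma divval (m q r : ℕ) (h : r < m + 6) : (q * (m + 6) + r) / (m + 6) = q := by
  rw [show q * (m + 6) + r = (m + 6) * q + r from by ring,
    Nat.mul_add_div (by omega), Nat.div_eq_of_lt h]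
  omega

lemma mem_Gf (m n : ℕ) : n ∈ Gf m ↔ n / (m + 6) < n % (m + 6) := by
  simp only [Gf, Finset.mem_biUnion, Finset.mem_range, Finset.mem_image]
  constructor
  · rintro ⟨r, hr, q, hq, rfl⟩
    rw [modval m q r hr, divval m q r hr]
    exact hq
  · intro h
    refine ⟨n % (m + 6), Nat.mod_lt _ (by omega), n / (m + 6), h, ?_⟩
    rw [mul_comm]
    exact Nat.div_add_mod n (m + 6)

lemma card_Gf (m : ℕ) : (Gf m).card * 2 = (m + 6) * (m + 5) := by
  rw [Gf, Finset.card_biUnion]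
  · have h : ∀ r ∈ Finset.range (m + 6),
        ((Finset.range r).image (fun q => q * (m + 6) + r)).card = r := by
      intro r _
      rw [Finset.card_image_of_injective _ (fun a b hab => by
        have h2 : a * (m + 6) = b * (m + 6) := by
          have := hab
          omega
        exact Nat.eq_of_mul_eq_mul_right (by omega) h2), Finset.card_range]
    rw [Finset.sum_congr rfl h, Finset.sum_range_id_mul_two,
      show m + 6 - 1 = m + 5 from by omega]
  · intro r1 h1 r2 h2 hne
    simp only [Finset.mem_coe, Finset.mem_range] at h1 h2
    rw [Function.onFun, Finset.disjoint_left]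
    rintro n hn1 hn2
    simp only [Finset.mem_image, Finset.mem_range] at hn1 hn2
    obtain ⟨q1, _, hq1⟩ := hn1
    obtain ⟨q2, _, hq2⟩ := hn2
    have e1 : n % (m + 6) = r1 := by rw [← hq1]; exact modval m q1 r1 h1
    have e2 : n % (m + 6) = r2 := by rw [← hq2]; exact modval m q2 r2 h2
    exact hne (e1 ▸ e2)

lemma t_mem_Gf (m c : ℕ) (h1 : m + 2 ≤ c) (h2 : c ≤ m + 4) :
    c * (m + 7) + 1 ∈ Gf m := by
  rw [mem_Gf, show c * (m + 7) + 1 = c * (m + 6) + (c + 1) from by ring,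
    modval m c (c + 1) (by omega), divval m c (c + 1) (by omega)]
  omega

lemma closure_TN (m c a b : ℕ) (hc1 : m + 2 ≤ c) (hc2 : c ≤ m + 4) :
    c * (m + 7) + 1 + (a * (m + 6) + b * (m + 7)) ∈
      Nd (m + 7) ∪ {(m + 4) * (m + 7) + 1, (m + 3) * (m + 7) + 1, (m + 2) * (m + 7) + 1} := by
  obtain ⟨u, hu, rfl⟩ : ∃ u, u ≤ 2 ∧ c = m + 2 + u := ⟨c - (m + 2), by omega, by omega⟩
  match a with
  | a + 1 =>
    exact Or.inl ⟨a, b + (m + 3 + u), by rw [sub_one]; ring⟩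
  | 0 =>
    by_cases hb : u + b ≤ 2
    · right
      interval_cases u <;> (have hb' : b ≤ 2 := by omega) <;> interval_cases b <;>
        simp only [Set.mem_insert_iff, Set.mem_singleton_iff] <;>
        first
          | (left; ring1)
          | (right; left; ring1)
          | (right; right; ring1)
          | omega
    · obtain ⟨j, hj⟩ : ∃ j, u + b = 3 + j := ⟨u + b - 3, by omega⟩
      left
      interval_cases u
      · obtain rfl : b = 3 + j := by omega
        exact ⟨m + 6, j, by rw [sub_one]; ring⟩
      · obtain rfl : b = 2 + j := by omega
        exact ⟨m + 6, j, by rw [sub_one]; ring⟩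
      · obtain rfl : b = 1 + j := by omega
        exact ⟨m + 6, j, by rw [sub_one]; ring⟩

lemma closure_TT (m c c' : ℕ) (hc1 : m + 2 ≤ c) (hc2 : c ≤ m + 4)
    (hc1' : m + 2 ≤ c') (hc2' : c' ≤ m + 4) :
    c * (m + 7) + 1 + (c' * (m + 7) + 1) ∈ Nd (m + 7) := by
  obtain ⟨u, hu, rfl⟩ : ∃ u, u ≤ 2 ∧ c = m + 2 + u := ⟨c - (m + 2), by omega, by omega⟩
  obtain ⟨v, hv, rfl⟩ : ∃ v, v ≤ 2 ∧ c' = m + 2 + v := ⟨c' - (m + 2), by omega, by omega⟩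
  exact ⟨m + 5, u + v + m, by rw [sub_one]; ring⟩

lemma compl_eq (m : ℕ) :
    (Nd (m + 7) ∪ {(m + 4) * (m + 7) + 1, (m + 3) * (m + 7) + 1, (m + 2) * (m + 7) + 1} : Set ℕ)ᶜ
      = ↑(Gf m \ {(m + 4) * (m + 7) + 1, (m + 3) * (m + 7) + 1, (m + 2) * (m + 7) + 1}) := by
  ext n
  simp only [Set.mem_compl_iff, Set.mem_union, Set.mem_insert_iff, Set.mem_singleton_iff,
    Finset.coe_sdiff, Set.mem_diff, Finset.mem_coe, Finset.mem_insert, Finset.mem_singleton,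
    mem_Nd_iff, mem_Gf, Finset.mem_sdiff, not_or, Nat.not_le]

end Stmt16Aux

open Stmt16Aux in
theorem stmt16 (d : ℕ) (hd : 7 ≤ d) :
    let S : Set ℕ := Nd d ∪ {(d - 3) * d + 1, (d - 4) * d + 1, (d - 5) * d + 1}
    (0 ∈ S) ∧ (∀ x ∈ S, ∀ y ∈ S, x + y ∈ S) ∧ Sᶜ.Finite ∧
      Sᶜ.ncard = (d - 1) * (d - 2) / 2 - 3 := by
  obtain ⟨m, rfl⟩ : ∃ m, d = m + 7 := ⟨d - 7, by omega⟩
  simp only [show m + 7 - 1 = m + 6 from by omega, show m + 7 - 2 = m + 5 from by omega,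
    show m + 7 - 3 = m + 4 from by omega, show m + 7 - 4 = m + 3 from by omega,
    show m + 7 - 5 = m + 2 from by omega]
  have getc : ∀ z ∈ ({(m + 4) * (m + 7) + 1, (m + 3) * (m + 7) + 1,
      (m + 2) * (m + 7) + 1} : Set ℕ),
      ∃ c, m + 2 ≤ c ∧ c ≤ m + 4 ∧ z = c * (m + 7) + 1 := by
    rintro z (rfl | rfl | rfl)
    exacts [⟨m + 4, by omega, by omega, rfl⟩, ⟨m + 3, by omega, by omega, rfl⟩,
      ⟨m + 2, by omega, by omega, rfl⟩]
  refine ⟨Or.inl ⟨0, 0, by simp⟩, ?_, ?_, ?_⟩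
  · intro x hx y hy
    rcases hx with hx | hx
    · rcases hy with hy | hy
      · obtain ⟨a, b, rfl⟩ := hx
        obtain ⟨a', b', rfl⟩ := hy
        exact Or.inl ⟨a + a', b + b', by ring⟩
      · obtain ⟨c, h1, h2, rfl⟩ := getc y hy
        obtain ⟨a, b, rfl⟩ := hx
        rw [add_comm (a * (m + 7 - 1) + b * (m + 7)), sub_one]
        exact closure_TN m c a b h1 h2
    · obtain ⟨c, h1, h2, rfl⟩ := getc x hx
      rcases hy with hy | hy
      · obtain ⟨a, b, rfl⟩ := hy
        rw [sub_one]
        exact closure_TN m c a b h1 h2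
      · obtain ⟨c', h1', h2', rfl⟩ := getc y hy
        exact Or.inl (closure_TT m c c' h1 h2 h1' h2')
  · rw [compl_eq]
    exact Finset.finite_toSet _
  · have hsub : ({(m + 4) * (m + 7) + 1, (m + 3) * (m + 7) + 1,
        (m + 2) * (m + 7) + 1} : Finset ℕ) ⊆ Gf m := by
      intro z hz
      simp only [Finset.mem_insert, Finset.mem_singleton] at hz
      rcases hz with rfl | rfl | rfl
      exacts [t_mem_Gf m (m + 4) (by omega) (by omega),
        t_mem_Gf m (m + 3) (by omega) (by omega),
        t_mem_Gf m (m + 2) (by omega) (by omega)]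
    have h3 : ({(m + 4) * (m + 7) + 1, (m + 3) * (m + 7) + 1,
        (m + 2) * (m + 7) + 1} : Finset ℕ).card = 3 := by
      rw [Finset.card_insert_of_notMem (by
        simp only [Finset.mem_insert, Finset.mem_singleton, not_or]
        exact ⟨Nat.ne_of_gt (by nlinarith), Nat.ne_of_gt (by nlinarith)⟩),
        Finset.card_insert_of_notMem (by
          simp only [Finset.mem_singleton]
          exact Nat.ne_of_gt (by nlinarith)),
        Finset.card_singleton]
    rw [compl_eq, Set.ncard_coe_finset, Finset.card_sdiff_of_subset hsub, h3]
    have hc := card_Gf m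
    generalize hP : (m + 6) * (m + 5) = P at hc ⊢
    omega
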